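/- Let ψ ∈ H ⊗ H be antisymmetric (i.e., swapping the tensor factors sends ψ to −ψ) where H is a finite-dimensional complex Hilbert space. Then ψ is the antisymmetrization of a product state (ψ = (u⊗v − v⊗u)/√2 for some u, v ∈ H) if and only if, in the canonical antisymmetric decomposition ψ = Σᵢ cᵢ (e_{2i−1}⊗e_{2i} − e_{2i}⊗e_{2i−1})/√2 with orthonormal eᵢ, exactly one coefficient cᵢ is nonzero. -/

import Mathlib

open scoped TensorProduct InnerProductSpace

private lemma aux_inj_four {n : ℕ} (i j : Fin n) (hij : i ≠ j) :
    Function.Injective (![Sum.inl i, Sum.inr i, Sum.inl j, Sum.inr j] : Fin 4 → Fin n ⊕ Fin n) := by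
  intro a b hab
  fin_cases a <;> fin_cases b <;> simp at hab <;>
    first | rfl | exact absurd hab hij | exact absurd hab.symm hij

set_option maxHeartbeats 1600000

/-- GMW-entanglement criterion: a nonzero antisymmetric vector `ψ ∈ H ⊗ H`, written
in a canonical antisymmetric decomposition `ψ = Σᵢ cᵢ (gᵢ⊗hᵢ − hᵢ⊗gᵢ)/√2` with
`g₁, h₁, ..., gₙ, hₙ` jointly orthonormal, is the antisymmetrization of a product
state (`ψ = (u⊗v − v⊗u)/√2`) iff exactly one coefficient `cᵢ` is nonzero. -/
theorem antisymmetrized_product_iff_one_coeff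
    (H : Type*) [NormedAddCommGroup H] [InnerProductSpace ℂ H] [FiniteDimensional ℂ H]
    (ψ : H ⊗[ℂ] H) (hψ : ψ ≠ 0) (hanti : TensorProduct.comm ℂ H H ψ = -ψ)
    (n : ℕ) (g h : Fin n → H) (horth : Orthonormal ℂ (Sum.elim g h))
    (c : Fin n → ℂ)
    (hdecomp : ψ = ∑ i, c i • ((Real.sqrt 2 : ℂ)⁻¹ •
        (g i ⊗ₜ[ℂ] h i - h i ⊗ₜ[ℂ] g i))) :
    (∃ u v : H, ψ = (Real.sqrt 2 : ℂ)⁻¹ • (u ⊗ₜ[ℂ] v - v ⊗ₜ[ℂ] u)) ↔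
      (∃! i, c i ≠ 0) := by
  classical
  set s : ℂ := (Real.sqrt 2 : ℂ)⁻¹ with hsdef
  have hs0 : s ≠ 0 := by
    have h2 : Real.sqrt 2 ≠ 0 := by positivity
    simp [hsdef, h2]
  have horth' := orthonormal_iff_ite.mp horth
  have hgg : ∀ i j, (⟪g i, g j⟫_ℂ) = if i = j then 1 else 0 := by
    intro i j; simpa using horth' (Sum.inl i) (Sum.inl j)
  have hgh : ∀ i j, (⟪g i, h j⟫_ℂ) = 0 := by
    intro i j; simpa using horth' (Sum.inl i) (Sum.inr j)
  have hhg : ∀ i j, (⟪h i, g j⟫_ℂ) = 0 := by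
    intro i j; simpa using horth' (Sum.inr i) (Sum.inl j)
  have hhh : ∀ i j, (⟪h i, h j⟫_ℂ) = if i = j then 1 else 0 := by
    intro i j; simpa using horth' (Sum.inr i) (Sum.inr j)
  let φ : H → (H ⊗[ℂ] H →ₗ[ℂ] H) := fun a =>
    TensorProduct.lift ((LinearMap.lsmul ℂ H).comp (innerSL ℂ a).toLinearMap)
  have hφ : ∀ a x y : H, φ a (x ⊗ₜ[ℂ] y) = (⟪a, x⟫_ℂ) • y := by
    intro a x y; simp [φ]
  have hφψ : ∀ a : H, φ a ψ =
      ∑ j, c j • (s • ((⟪a, g j⟫_ℂ) • h j - (⟪a, h j⟫_ℂ) • g j)) := by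
    intro a
    rw [hdecomp, map_sum]
    refine Finset.sum_congr rfl fun j _ => ?_
    rw [map_smul, map_smul, map_sub, hφ, hφ]
  have hgψ : ∀ i, φ (g i) ψ = c i • (s • h i) := by
    intro i
    rw [hφψ, Finset.sum_eq_single i]
    · simp [hgg, hgh, show ‖g i‖ = 1 from horth.1 (Sum.inl i)]
    · intro j _ hj
      simp [hgg, hgh, if_neg (show i ≠ j from fun e => hj e.symm)]
    · simp
  have hhψ : ∀ i, φ (h i) ψ = -(c i • (s • g i)) := by
    intro i
    rw [hφψ, Finset.sum_eq_single i]
    · simp [hhg, hhh, show ‖h i‖ = 1 from horth.1 (Sum.inr i)]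
    · intro j _ hj
      simp [hhg, hhh, if_neg (show i ≠ j from fun e => hj e.symm)]
    · simp
  constructor
  · rintro ⟨u, v, huv⟩
    set W : Submodule ℂ H := Submodule.span ℂ ({u, v} : Set H) with hW
    have hmemuv : ∀ a : H, (⟪a, u⟫_ℂ) • v - (⟪a, v⟫_ℂ) • u ∈ W := by
      intro a
      exact sub_mem (Submodule.smul_mem _ _ (Submodule.subset_span (by simp)))
        (Submodule.smul_mem _ _ (Submodule.subset_span (by simp)))
    have hφprod : ∀ a : H, φ a ψ = s • ((⟪a, u⟫_ℂ) • v - (⟪a, v⟫_ℂ) • u) := by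
      intro a
      rw [huv, map_smul, map_sub, hφ, hφ]
    have hmem : ∀ i, c i ≠ 0 → g i ∈ W ∧ h i ∈ W := by
      intro i hci
      constructor
      · have e1 : -(c i • (s • g i)) = s • ((⟪h i, u⟫_ℂ) • v - (⟪h i, v⟫_ℂ) • u) :=
          (hhψ i).symm.trans (hφprod (h i))
        have e2 : g i = (-(c i * s))⁻¹ • (s • ((⟪h i, u⟫_ℂ) • v - (⟪h i, v⟫_ℂ) • u)) := by
          rw [← e1, smul_smul, smul_neg, smul_smul]
          field_simp
          simp
        rw [e2]
        exact Submodule.smul_mem _ _ (Submodule.smul_mem _ _ (hmemuv _))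
      · have e1 : c i • (s • h i) = s • ((⟪g i, u⟫_ℂ) • v - (⟪g i, v⟫_ℂ) • u) :=
          (hgψ i).symm.trans (hφprod (g i))
        have e2 : h i = (c i * s)⁻¹ • (s • ((⟪g i, u⟫_ℂ) • v - (⟪g i, v⟫_ℂ) • u)) := by
          rw [← e1, smul_smul, smul_smul]
          field_simp
          simp
        rw [e2]
        exact Submodule.smul_mem _ _ (Submodule.smul_mem _ _ (hmemuv _))
    -- there exists a nonzero coefficient
    obtain ⟨i, hi⟩ : ∃ i, c i ≠ 0 := by
      by_contra hall
      push_neg at hall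
      apply hψ
      rw [hdecomp]
      simp [hall]
    refine ⟨i, hi, fun j hj => ?_⟩
    by_contra hji
    -- four orthonormal vectors in W, which has finrank ≤ 2
    have hWle : Module.finrank ℂ W ≤ 2 := by
      refine (finrank_span_le_card ({u, v} : Set H)).trans ?_
      rw [Set.toFinset_insert, Set.toFinset_singleton]
      exact (Finset.card_insert_le _ _).trans (by simp)
    let f : Fin 4 → (Fin n ⊕ Fin n) := ![.inl i, .inr i, .inl j, .inr j]
    have hf : Function.Injective f := aux_inj_four i j (fun e => hji (e ▸ rfl))
    have hli : LinearIndependent ℂ (Sum.elim g h ∘ f) :=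
      (horth.comp f hf).linearIndependent
    have hmem4 : ∀ k : Fin 4, (Sum.elim g h ∘ f) k ∈ W := by
      intro k
      fin_cases k
      · exact (hmem i hi).1
      · exact (hmem i hi).2
      · exact (hmem j hj).1
      · exact (hmem j hj).2
    let b' : Fin 4 → W := fun k => ⟨(Sum.elim g h ∘ f) k, hmem4 k⟩
    have hli' : LinearIndependent ℂ b' :=
      LinearIndependent.of_comp W.subtype (by exact hli)
    have h4 : 4 ≤ Module.finrank ℂ W := by
      simpa using hli'.fintype_card_le_finrank
    omega
  · rintro ⟨i, hi, huniq⟩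
    refine ⟨c i • g i, h i, ?_⟩
    have hzero : ∀ j, j ≠ i → c j = 0 := by
      intro j hj
      by_contra hcj
      exact hj (huniq j hcj)
    rw [hdecomp, Finset.sum_eq_single i]
    · rw [← TensorProduct.smul_tmul', TensorProduct.tmul_smul, ← smul_sub, smul_comm]
    · intro j _ hj
      simp [hzero j hj]
    · simp
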